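/- arXiv:2209.04413 — 7 statements merged into one kernel-verified Lean document; each statement's English description precedes it below -/
import Mathlib

section
/- The polynomial P(x1,...,x5) = x1·x2·x3 + x2·x3·x4 + x3·x4·x5 + x4·x5·x1 + x5·x1·x2 is not real stable: there exist complex numbers z1,...,z5, all with strictly positive imaginary part, at which P vanishes. -/
open MvPolynomial Complex

/-- A real polynomial is real stable if it does not vanish when all
variables lie in the open upper half-plane. -/
def RealStable {σ : Type*} (P : MvPolynomial σ ℝ) : Prop :=
  ∀ z : σ → ℂ, (∀ i, 0 < (z i).im) → MvPolynomial.aeval z P ≠ 0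

/-- The vertex spanning polynomial of the 5-cycle,
P = x1 x2 x3 + x2 x3 x4 + x3 x4 x5 + x4 x5 x1 + x5 x1 x2, is not real stable. -/
theorem stmt0 :
    ∃ z : Fin 5 → ℂ, (∀ i, 0 < (z i).im) ∧
      MvPolynomial.aeval z
        ((X 0 * X 1 * X 2 + X 1 * X 2 * X 3 + X 2 * X 3 * X 4
          + X 3 * X 4 * X 0 + X 4 * X 0 * X 1 : MvPolynomial (Fin 5) ℝ)) = 0 := by
  refine ⟨![1 + I, -3 + I, (-6 + 2*I)/5, -3 + I, 1 + I], ?_, ?_⟩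
  · intro i
    fin_cases i <;> simp
  · simp only [map_add, map_mul, aeval_X]
    simp only [Matrix.cons_val_zero, Matrix.cons_val_one, Matrix.head_cons,
      Matrix.cons_val_two, Matrix.tail_cons, Matrix.cons_val_three, Matrix.cons_val_four]
    have h : I ^ 2 = -1 := I_sq
    ring_nf
    linear_combination (-(48/5 : ℂ) + (16/5)*I) * h
end

section
/- If P(x1,...,xn) is real stable and d is the degree of P in the variable x1, then the polynomial x1^d · P(−1/x1, x2, ..., xn) is either identically zero or real stable. -/
open MvPolynomial Complex

/-- If `P` is real stable, `d` is the degree of `P` in the variable `x₀`, and `Q` is the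
polynomial `x₀ ^ d * P (-1/x₀, x₁, …)` (expressed via its values on points with `z₀ ≠ 0`),
then `Q` is identically zero or real stable. -/
theorem stmt2 {n : ℕ} (P Q : MvPolynomial (Fin (n + 1)) ℝ) (hP : RealStable P)
    (hQ : ∀ z : Fin (n + 1) → ℂ, z 0 ≠ 0 →
      MvPolynomial.aeval z Q
        = (z 0) ^ (P.degreeOf 0) *
          MvPolynomial.aeval (Function.update z 0 (-(z 0)⁻¹)) P) :
    Q = 0 ∨ RealStable Q := by
  right
  intro z hz
  have hz0 : z 0 ≠ 0 := by
    intro h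
    have := hz 0
    rw [h] at this
    simp at this
  rw [hQ z hz0]
  refine mul_ne_zero (pow_ne_zero _ hz0) (hP _ ?_)
  intro i
  rcases eq_or_ne i 0 with rfl | hi
  · rw [Function.update_self]
    have hns : 0 < Complex.normSq (z 0) := Complex.normSq_pos.mpr hz0
    rw [Complex.neg_im, Complex.inv_im, neg_div, neg_neg]
    exact div_pos (hz 0) hns
  · rw [Function.update_of_ne hi]
    exact hz i
end

section
/- The polynomial Q(x1,...,xn) = Σ_{i=1}^{n} x_i·x_{i+1} (indices mod n, with x_{n+1} = x_1), for n ≥ 6, is not real stable. -/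
open MvPolynomial Complex Finset

/-- Real part pattern: (0, t, t, 0, -t, -t, 0, 0, ...). -/
def pp (t : ℝ) (k : ℕ) : ℝ :=
  if k = 1 ∨ k = 2 then t else if k = 4 ∨ k = 5 then -t else 0

/-- Shifted pattern: qq t k = pp t (k+1 mod n). -/
def qq (t : ℝ) (k : ℕ) : ℝ :=
  if k = 0 ∨ k = 1 then t else if k = 3 ∨ k = 4 then -t else 0

lemma pp_shift (m : ℕ) (t : ℝ) (i : Fin (m + 6)) :
    pp t ((i + 1 : Fin (m + 6)).val) = qq t i.val := by
  have hv : (i + 1 : Fin (m + 6)).val = (i.val + 1) % (m + 6) := by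
    simp [Fin.add_def]
  rw [hv]
  rcases Nat.lt_or_ge i.val 5 with h | h
  · have : (i.val + 1) % (m + 6) = i.val + 1 := Nat.mod_eq_of_lt (by omega)
    rw [this]
    unfold pp qq
    split_ifs <;> first | rfl | omega
  · rcases Nat.lt_or_ge (i.val + 1) (m + 6) with h2 | h2
    · have : (i.val + 1) % (m + 6) = i.val + 1 := Nat.mod_eq_of_lt h2
      rw [this]
      unfold pp qq
      split_ifs <;> first | rfl | omega 
    · have hlast : i.val = m + 5 := by have := i.isLt; omega
      have : (i.val + 1) % (m + 6) = 0 := by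
        rw [hlast]
        simp [Nat.mod_self]
      rw [this]
      unfold pp qq
      split_ifs <;> first | rfl | omega | simp_all

/-- For n ≥ 6 (written n = m + 6), the polynomial Q = Σ xᵢ x_{i+1}
(indices cyclic mod n) is not real stable. -/
theorem stmt4 (m : ℕ) :
    ¬ RealStable (∑ i : Fin (m + 6), (X i * X (i + 1) : MvPolynomial (Fin (m + 6)) ℝ)) := by
  intro h
  set t : ℝ := Real.sqrt ((m + 6) / 2) with ht
  have ht2 : t ^ 2 = (m + 6) / 2 := Real.sq_sqrt (by have := Nat.cast_nonneg (α := ℝ) m; linarith)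
  set z : Fin (m + 6) → ℂ := fun k => (pp t k.val : ℂ) + I with hz
  refine h z (fun i => ?_) ?_
  · simp [hz]
  · rw [map_sum]
    have step : ∀ i : Fin (m + 6),
        aeval z ((X i * X (i + 1) : MvPolynomial (Fin (m + 6)) ℝ)) = ((pp t i.val : ℂ) + I) * ((qq t i.val : ℂ) + I) := by
      intro i
      rw [map_mul, aeval_X, aeval_X, ← pp_shift m t i, hz]
    rw [Finset.sum_congr rfl fun i _ => step i]
    rw [Fin.sum_univ_eq_sum_range (fun k => ((pp t k : ℂ) + I) * ((qq t k : ℂ) + I))]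
    rw [Finset.range_eq_Ico,
      ← Finset.sum_Ico_consecutive _ (by omega : 0 ≤ 6) (by omega : 6 ≤ m + 6)]
    have htail : ∑ k ∈ Finset.Ico 6 (m + 6),
        ((pp t k : ℂ) + I) * ((qq t k : ℂ) + I) = -(m : ℂ) := by
      have : ∀ k ∈ Finset.Ico 6 (m + 6),
          ((pp t k : ℂ) + I) * ((qq t k : ℂ) + I) = -1 := by
        intro k hk
        rw [Finset.mem_Ico] at hk
        have hp : pp t k = 0 := by unfold pp; split_ifs <;> first | rfl | omega
        have hq : qq t k = 0 := by unfold qq; split_ifs <;> first | rfl | omega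
        rw [hp, hq]
        simp [Complex.I_mul_I]
      rw [Finset.sum_congr rfl this]
      simp [Nat.card_Ico]
    rw [htail]
    have hhead : ∑ k ∈ Finset.Ico 0 6,
        ((pp t k : ℂ) + I) * ((qq t k : ℂ) + I) = 2 * (t : ℂ) ^ 2 - 6 := by
      rw [← Finset.range_eq_Ico]
      simp only [Finset.sum_range_succ, Finset.sum_range_zero]
      unfold pp qq
      norm_num
      ring_nf
      simp [Complex.I_sq]
    rw [hhead]
    have hc : (t : ℂ) ^ 2 = ((m : ℂ) + 6) / 2 := by
      rw [← Complex.ofReal_pow, ht2]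
      push_cast
      ring
    rw [hc]
    ring
end

section
/- For every n ≥ 5, the vertex spanning polynomial of the n-cycle, P_{C_n}(x1,...,xn) = Σ_{i=1}^{n} Π_{j ≠ i, i+1} x_j (indices mod n), is not real stable. -/
open MvPolynomial Complex Finset

noncomputable def vvA (m : ℕ) : ℂ := ⟨Real.sqrt (5*m+55/16), 1/4⟩
noncomputable def vvB (m : ℕ) : ℂ := ⟨-(2*Real.sqrt (5*m+55/16)/5), 1/4⟩

noncomputable def vv (m : ℕ) (k : ℕ) : ℂ :=
  if k = 0 ∨ k = 1 then vvA m else if k = 2 ∨ k = m+4 then vvB m else Complex.I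

noncomputable def uu (m : ℕ) (i : Fin (m+5)) : ℂ := vv m i.val

lemma uu_im_pos (m : ℕ) (i : Fin (m+5)) : 0 < (uu m i).im := by
  unfold uu vv vvA vvB
  split_ifs <;> norm_num

lemma final_alg (m : ℕ) :
    vvA m * vvA m + vvA m * vvB m + vvB m * Complex.I + (-(m:ℂ)) + Complex.I * vvB m + vvB m * vvA m = 0 := by
  have hnn : (0:ℝ) ≤ 5*m + 55/16 := by positivity
  have h : ((Real.sqrt (5*m+55/16) : ℂ))^2 = 5*m + 55/16 := by
    rw [← Complex.ofReal_pow, Real.sq_sqrt hnn]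
    push_cast; ring
  rw [vvA, vvB, Complex.mk_eq_add_mul_I, Complex.mk_eq_add_mul_I]
  push_cast
  linear_combination (1/5 : ℂ) * h + (11/16 : ℂ) * Complex.I_sq

lemma key (m : ℕ) : ∑ i : Fin (m+5), uu m i * uu m (i+1) = 0 := by
  have hval : ∀ i : Fin (m+5), uu m (i+1) = vv m ((i.val + 1) % (m+5)) := by
    intro i
    unfold uu
    congr 1
  have hstep : ∑ i : Fin (m+5), uu m i * uu m (i+1)
      = ∑ k ∈ range (m+5), vv m k * vv m ((k+1) % (m+5)) := by
    rw [← Fin.sum_univ_eq_sum_range (fun k => vv m k * vv m ((k+1) % (m+5))) (m+5)]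
    exact Finset.sum_congr rfl (fun i _ => by rw [hval i]; rfl)
  rw [hstep]
  have hv0 : vv m 0 = vvA m := by simp [vv]
  have hv1 : vv m 1 = vvA m := by simp [vv]
  have hv2 : vv m 2 = vvB m := by
    unfold vv; rw [if_neg (by omega), if_pos (by omega)]
  have hvlast : vv m (m+4) = vvB m := by
    unfold vv; rw [if_neg (by omega), if_pos (by omega)]
  have hvmid : ∀ k, 3 ≤ k → k ≤ m+3 → vv m k = Complex.I := by
    intro k h1 h2
    unfold vv; rw [if_neg (by omega), if_neg (by omega)]
  rw [Finset.sum_range_succ, Finset.sum_range_succ]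
  have hmod1 : (m+3+1) % (m+5) = m+4 := Nat.mod_eq_of_lt (by omega)
  have hmod2 : (m+4+1) % (m+5) = 0 := Nat.mod_self (m+5)
  rw [hmod1, hmod2, hv0, hvlast]
  have hm3 : vv m (m+3) = Complex.I := hvmid _ (by omega) (by omega)
  rw [hm3]
  have hsplit : ∑ k ∈ range (m+3), vv m k * vv m ((k+1) % (m+5))
      = (∑ k ∈ range 3, vv m k * vv m ((k+1) % (m+5)))
        + ∑ k ∈ Ico 3 (m+3), vv m k * vv m ((k+1) % (m+5)) := by
    simp only [Finset.range_eq_Ico]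
    exact (Finset.sum_Ico_consecutive _ (by omega) (by omega)).symm
  rw [hsplit]
  have hmid : ∑ k ∈ Ico 3 (m+3), vv m k * vv m ((k+1) % (m+5)) = -(m:ℂ) := by
    have hterm : ∀ k ∈ Ico 3 (m+3), vv m k * vv m ((k+1) % (m+5)) = -1 := by
      intro k hk
      rw [Finset.mem_Ico] at hk
      rw [Nat.mod_eq_of_lt (by omega), hvmid k (by omega) (by omega),
        hvmid (k+1) (by omega) (by omega), Complex.I_mul_I]
    rw [Finset.sum_congr rfl hterm, Finset.sum_const, Nat.card_Ico]
    simp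
  rw [hmid]
  rw [Finset.sum_range_succ, Finset.sum_range_succ, Finset.sum_range_one]
  norm_num
  rw [Nat.mod_eq_of_lt (show (2:ℕ) < m+5 by omega),
    Nat.mod_eq_of_lt (show (3:ℕ) < m+5 by omega),
    hv0, hv1, hv2, hvmid 3 (by omega) (by omega)]
  linear_combination final_alg m

/-- For n ≥ 5 (written n = m + 5), the vertex spanning polynomial of the n-cycle,
`P = Σ_i Π_{j ∉ {i, i+1}} x_j` (indices mod n), is not real stable. -/
theorem stmt5 (m : ℕ) :
    ¬ RealStable (∑ i : Fin (m + 5), ∏ j ∈ ({i, i + 1}ᶜ : Finset (Fin (m + 5))),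
        (X j : MvPolynomial (Fin (m + 5)) ℝ)) := by
  intro h
  set z : Fin (m+5) → ℂ := fun i => -(uu m i)⁻¹ with hzdef
  have hune : ∀ i, uu m i ≠ 0 := by
    intro i h0
    have := uu_im_pos m i
    rw [h0] at this; simp at this
  have hzne : ∀ i, z i ≠ 0 := by
    intro i
    simp [hzdef, inv_ne_zero, hune i]
  refine h z ?_ ?_
  · intro i
    have h1 := uu_im_pos m i
    have h2 : 0 < Complex.normSq (uu m i) := Complex.normSq_pos.2 (hune i)
    have him : (z i).im = (uu m i).im / Complex.normSq (uu m i) := by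
      simp [hzdef, Complex.inv_im, neg_div]
    rw [him]; exact div_pos h1 h2
  · rw [map_sum]
    have hne : ∀ i : Fin (m+5), i ≠ i + 1 := by
      intro i hcontra
      have h1 : ((1:Fin (m+5)):ℕ) = 1 := rfl
      have hv : (i:ℕ) = ((i:ℕ) + 1) % (m+5) := by
        have h2 := congrArg Fin.val hcontra
        rwa [Fin.val_add, h1] at h2
      have hlt := i.isLt
      rcases Nat.lt_or_ge (i.val+1) (m+5) with hc | hc
      · rw [Nat.mod_eq_of_lt hc] at hv; omega
      · have he : i.val = m+4 := by omega
        rw [he] at hv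
        rw [show m+4+1 = m+5 from rfl, Nat.mod_self] at hv
        omega
    have hterm : ∀ i : Fin (m+5),
        aeval z (∏ j ∈ ({i, i+1}ᶜ : Finset (Fin (m+5))), (X j : MvPolynomial _ ℝ))
          = (∏ j, z j) * (uu m i * uu m (i+1)) := by
      intro i
      rw [map_prod]
      simp only [aeval_X]
      have hpair : ∏ j ∈ ({i, i+1} : Finset (Fin (m+5))), z j = z i * z (i+1) :=
        Finset.prod_pair (hne i)
      have hcp := Finset.prod_compl_mul_prod ({i, i+1} : Finset (Fin (m+5))) z
      rw [hpair] at hcp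
      have hzz : z i * z (i+1) ≠ 0 := mul_ne_zero (hzne i) (hzne (i+1))
      have hinv : (z i * z (i+1))⁻¹ = uu m i * uu m (i+1) := by
        simp [hzdef, mul_inv, inv_neg, inv_inv, neg_mul_neg, mul_comm]
      calc ∏ j ∈ ({i,i+1}ᶜ : Finset (Fin (m+5))), z j
          = (∏ j ∈ ({i,i+1}ᶜ : Finset (Fin (m+5))), z j)
              * ((z i * z (i+1)) * (z i * z (i+1))⁻¹) := by
            rw [mul_inv_cancel₀ hzz, mul_one]
        _ = (∏ j, z j) * (z i * z (i+1))⁻¹ := by rw [← mul_assoc, hcp]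
        _ = (∏ j, z j) * (uu m i * uu m (i+1)) := by rw [hinv]
    rw [Finset.sum_congr rfl (fun i _ => hterm i), ← Finset.mul_sum, key, mul_zero]
end

section
/- Let G be a connected graph with a cut vertex v, let V1,...,Vk be the vertex sets of the connected components of G − v, and let G_i = G[V_i ∪ {v}]. Then P_G = x_v^{k−1} · Π_{i=1}^{k} P_{G_i} (where each P_{G_i} is in the variables corresponding to the vertices of G_i). -/
set_option linter.unusedSectionVars false
set_option maxHeartbeats 1000000

open MvPolynomial Finset

noncomputable def spanPoly (V : Type*) [Fintype V] (G : SimpleGraph V) :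
    MvPolynomial V ℝ := by
  classical exact
    ∑ T ∈ Finset.univ.filter (fun T : SimpleGraph V => T ≤ G ∧ T.IsTree),
      ∏ v, (X v : MvPolynomial V ℝ) ^ (T.degree v - 1)

namespace GlueAux

variable {V : Type*} [Fintype V] [DecidableEq V] {k : ℕ}

/-- The vertex set of the `i`-th piece. -/
abbrev SS (v : V) (A : Fin k → Finset V) (i : Fin k) : Set V :=
  ((insert v (A i) : Finset V) : Set V)

lemma mem_SS {v : V} {A : Fin k → Finset V} {i : Fin k} {a : V} :
    a ∈ SS v A i ↔ a = v ∨ a ∈ A i := by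
  simp [SS]

lemma v_mem_SS (v : V) (A : Fin k → Finset V) (i : Fin k) : v ∈ SS v A i :=
  mem_SS.2 (Or.inl rfl)

/-- Hypotheses of the cut-vertex situation. -/
structure Setup (G : SimpleGraph V) (v : V) (A : Fin k → Finset V) : Prop where
  hne : ∀ i, (A i).Nonempty
  hv : ∀ i, v ∉ A i
  hdisj : ∀ i j, i ≠ j → Disjoint (A i) (A j)
  hcover : ∀ u : V, u ≠ v → ∃ i, u ∈ A i
  hnoedge : ∀ i j, i ≠ j → ∀ a ∈ A i, ∀ b ∈ A j, ¬ G.Adj a b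

variable {G : SimpleGraph V} {v : V} {A : Fin k → Finset V}

lemma Setup.eq_v_of_mem (st : Setup G v A) {i j : Fin k} (hij : i ≠ j) {a : V}
    (hi : a ∈ SS v A i) (hj : a ∈ SS v A j) : a = v := by
  rcases mem_SS.1 hi with h | h
  · exact h
  rcases mem_SS.1 hj with h' | h'
  · exact h'
  exact absurd h' (Finset.disjoint_left.1 (st.hdisj i j hij) h)

lemma Setup.mem_A_of_mem_SS (st : Setup G v A) {i : Fin k} {a : V} (ha : a ∈ SS v A i)
    (hav : a ≠ v) : a ∈ A i := (mem_SS.1 ha).resolve_left hav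

lemma Setup.part_eq (st : Setup G v A) {i j : Fin k} {a : V} (hav : a ≠ v)
    (hi : a ∈ SS v A i) (hj : a ∈ SS v A j) : i = j := by
  by_contra hij
  exact hav (st.eq_v_of_mem hij hi hj)

/-- every edge of a subgraph of `G` lies inside one of the pieces. -/
lemma Setup.edge_part (st : Setup G v A) {T : SimpleGraph V} (hT : T ≤ G) {a b : V}
    (hab : T.Adj a b) : ∃ i, a ∈ SS v A i ∧ b ∈ SS v A i := by
  have hG' : G.Adj a b := hT hab
  by_cases ha : a = v
  · obtain ⟨i, hb⟩ := st.hcover b (fun h => hG'.ne (ha.trans h.symm))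
    exact ⟨i, mem_SS.2 (Or.inl ha), mem_SS.2 (Or.inr hb)⟩
  by_cases hb : b = v
  · obtain ⟨i, hai⟩ := st.hcover a ha
    exact ⟨i, mem_SS.2 (Or.inr hai), mem_SS.2 (Or.inl hb)⟩
  obtain ⟨i, hai⟩ := st.hcover a ha
  obtain ⟨j, hbj⟩ := st.hcover b hb
  rcases eq_or_ne i j with rfl | hij
  · exact ⟨i, mem_SS.2 (Or.inr hai), mem_SS.2 (Or.inr hbj)⟩
  · exact absurd hG' (st.hnoedge i j hij a hai b hbj)

/-- The glued graph. -/
def F (v : V) (A : Fin k → Finset V) (p : ∀ i, SimpleGraph (SS v A i)) : SimpleGraph V where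
  Adj a b := ∃ (i : Fin k) (ha : a ∈ SS v A i) (hb : b ∈ SS v A i), (p i).Adj ⟨a, ha⟩ ⟨b, hb⟩
  symm := ⟨by rintro a b ⟨i, ha, hb, h⟩; exact ⟨i, hb, ha, h.symm⟩⟩
  loopless := ⟨by rintro a ⟨i, ha, hb, h⟩; exact h.ne rfl⟩

variable {p : ∀ i : Fin k, SimpleGraph (SS v A i)}

/-- inclusion homomorphism -/
def toF (p : ∀ i, SimpleGraph (SS v A i)) (i : Fin k) : p i →g F v A p where
  toFun := Subtype.val
  map_rel' := fun {a b} h => ⟨i, a.2, b.2, h⟩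

@[simp] lemma toF_apply (i : Fin k) (a : SS v A i) : toF p i a = a.1 := rfl

lemma F_le (hp : ∀ i, p i ≤ G.induce (SS v A i)) : F v A p ≤ G := by
  rintro a b ⟨i, ha, hb, h⟩
  exact hp i h

lemma Setup.adj_F_iff (st : Setup G v A) {i : Fin k} {a b : V}
    (ha : a ∈ SS v A i) (hb : b ∈ SS v A i) :
    (F v A p).Adj a b ↔ (p i).Adj ⟨a, ha⟩ ⟨b, hb⟩ := by
  constructor
  · rintro ⟨j, ha', hb', h⟩
    rcases eq_or_ne i j with rfl | hij
    · exact h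
    · exact absurd (Subtype.ext ((st.eq_v_of_mem hij.symm ha' ha).trans
        (st.eq_v_of_mem hij.symm hb' hb).symm) : (⟨a, ha'⟩ : SS v A j) = ⟨b, hb'⟩) h.ne
  · intro h
    exact ⟨i, ha, hb, h⟩

lemma Setup.induce_F (st : Setup G v A) (i : Fin k) :
    (F v A p).induce (SS v A i) = p i := by
  ext ⟨a, ha⟩ ⟨b, hb⟩
  exact st.adj_F_iff ha hb

lemma Setup.F_induce (st : Setup G v A) {T : SimpleGraph V} (hT : T ≤ G) :
    F v A (fun i => T.induce (SS v A i)) = T := by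
  ext a b
  constructor
  · rintro ⟨i, ha, hb, h⟩
    exact h
  · intro h
    obtain ⟨i, ha, hb⟩ := st.edge_part hT h
    exact ⟨i, ha, hb, h⟩

lemma Setup.F_connected (st : Setup G v A) (hp : ∀ i, (p i).Connected) :
    (F v A p).Connected := by
  have hreach : ∀ u : V, (F v A p).Reachable u v := by
    intro u
    by_cases hu : u = v
    · cases hu; exact SimpleGraph.Reachable.refl v
    obtain ⟨i, hui⟩ := st.hcover u hu
    exact ((hp i).preconnected ⟨u, mem_SS.2 (Or.inr hui)⟩ ⟨v, v_mem_SS v A i⟩).map (toF p i)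
  have : Nonempty V := ⟨v⟩
  exact ⟨fun a b => (hreach a).trans (hreach b).symm⟩

/-- walk projection: reachability within a piece. -/
lemma Setup.walk_reach (st : Setup G v A) {T : SimpleGraph V}
    (hedge : ∀ a b : V, T.Adj a b → ∃ i, a ∈ SS v A i ∧ b ∈ SS v A i) {i : Fin k}
    {x y : V} (w : T.Walk x y) :
    (∀ (hx : x ∈ SS v A i) (hy : y ∈ SS v A i),
        (T.induce (SS v A i)).Reachable ⟨x, hx⟩ ⟨y, hy⟩) ∧
    (x ∉ SS v A i → ∀ (hy : y ∈ SS v A i),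
        (T.induce (SS v A i)).Reachable ⟨v, v_mem_SS v A i⟩ ⟨y, hy⟩) := by
  induction w with
  | nil => exact ⟨fun hx hy => SimpleGraph.Reachable.refl _, fun hx hy => absurd hy hx⟩
  | @cons a b c h w ih =>
    constructor
    · intro ha hc
      by_cases hb : b ∈ SS v A i
      · exact (SimpleGraph.Adj.reachable
          (show (T.induce (SS v A i)).Adj ⟨a, ha⟩ ⟨b, hb⟩ from h)).trans (ih.1 hb hc)
      · obtain ⟨j, haj, hbj⟩ := hedge a b h
        have hji : i ≠ j := fun e => hb (e ▸ hbj)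
        have hav : a = v := st.eq_v_of_mem hji ha haj
        have e : (⟨a, ha⟩ : SS v A i) = ⟨v, v_mem_SS v A i⟩ := Subtype.ext hav
        rw [e]
        exact ih.2 hb hc
    · intro ha hc
      obtain ⟨j, haj, hbj⟩ := hedge a b h
      by_cases hb : b ∈ SS v A i
      · have hij : i ≠ j := fun e => ha (e ▸ haj)
        have hbv : b = v := st.eq_v_of_mem hij hb hbj
        have e : (⟨b, hb⟩ : SS v A i) = ⟨v, v_mem_SS v A i⟩ := Subtype.ext hbv
        exact e ▸ ih.1 hb hc
      · exact ih.2 hb hc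

lemma Setup.induce_connected (st : Setup G v A) {T : SimpleGraph V} (hT : T ≤ G)
    (hTc : T.Connected) (i : Fin k) : (T.induce (SS v A i)).Connected := by
  have : Nonempty (SS v A i) := ⟨⟨v, v_mem_SS v A i⟩⟩
  refine ⟨fun x y => ?_⟩
  obtain ⟨w⟩ := hTc.preconnected x.1 y.1
  have := (st.walk_reach (fun a b hab => st.edge_part hT hab) w).1 x.2 y.2
  simpa using this

lemma induce_acyclic {T : SimpleGraph V} (hT : T.IsAcyclic) (s : Set V) :
    (T.induce s).IsAcyclic := by
  intro x c hc
  exact hT (c.map (SimpleGraph.Embedding.induce s).toHom)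
    (hc.map Subtype.val_injective)

lemma Setup.F_acyclic (st : Setup G v A) (hp : ∀ i, (p i).IsTree) :
    (F v A p).IsAcyclic := by
  classical
  rw [SimpleGraph.isAcyclic_iff_forall_adj_isBridge]
  rintro a b ⟨i, ha, hb, hadj⟩
  rw [SimpleGraph.isBridge_iff]
  rintro ⟨w⟩
  have hbr : (p i).IsBridge s(⟨a, ha⟩, ⟨b, hb⟩) :=
    (SimpleGraph.isAcyclic_iff_forall_adj_isBridge.mp (hp i).2) hadj
  rw [SimpleGraph.isBridge_iff] at hbr
  refine hbr ?_
  have hedge : ∀ x y : V,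
      (F v A p \ SimpleGraph.fromEdgeSet {s(a, b)}).Adj x y →
        ∃ j, x ∈ SS v A j ∧ y ∈ SS v A j := by
    intro x y hxy
    rw [SimpleGraph.sdiff_adj] at hxy
    obtain ⟨⟨j, hx, hy, -⟩, -⟩ := hxy
    exact ⟨j, hx, hy⟩
  have hreach := (st.walk_reach hedge (i := i) w).1 ha hb
  refine SimpleGraph.Reachable.mono ?_ hreach
  rintro ⟨x, hx⟩ ⟨y, hy⟩ hxy
  have hxy' : (F v A p \ SimpleGraph.fromEdgeSet {s(a, b)}).Adj x y := hxy
  rw [SimpleGraph.sdiff_adj] at hxy'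
  obtain ⟨hFxy, hne⟩ := hxy'
  rw [SimpleGraph.deleteEdges, SimpleGraph.sdiff_adj]
  refine ⟨(st.adj_F_iff hx hy).1 hFxy, ?_⟩
  intro hcon
  rw [SimpleGraph.fromEdgeSet_adj] at hcon
  obtain ⟨hmem, -⟩ := hcon
  rw [Set.mem_singleton_iff] at hmem
  have := congrArg (Sym2.map (Subtype.val)) hmem
  simp only [Sym2.map_pair_eq] at this
  exact hne ((SimpleGraph.fromEdgeSet_adj _).2 ⟨by simp [this], hFxy.ne⟩)

open Classical in
lemma Setup.degree_F_of_mem (st : Setup G v A) {i : Fin k} {u : V} (hu : u ∈ A i) :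
    (F v A p).degree u = (p i).degree ⟨u, mem_SS.2 (Or.inr hu)⟩ := by
  have huv : u ≠ v := fun h => st.hv i (h ▸ hu)
  have hkey : (F v A p).neighborFinset u
      = ((p i).neighborFinset ⟨u, mem_SS.2 (Or.inr hu)⟩).image Subtype.val := by
    ext b
    simp only [SimpleGraph.mem_neighborFinset, Finset.mem_image]
    constructor
    · rintro ⟨j, hu2, hb2, h⟩
      have hji : j = i := st.part_eq huv hu2 (mem_SS.2 (Or.inr hu))
      subst hji
      exact ⟨⟨b, hb2⟩, h, rfl⟩
    · rintro ⟨⟨b', hb'⟩, hadj, rfl⟩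
      exact ⟨i, mem_SS.2 (Or.inr hu), hb', hadj⟩
  rw [SimpleGraph.degree, SimpleGraph.degree, hkey,
    Finset.card_image_of_injective _ Subtype.val_injective]

open Classical in
lemma Setup.degree_F_v (st : Setup G v A) :
    (F v A p).degree v = ∑ i, (p i).degree ⟨v, v_mem_SS v A i⟩ := by
  have hkey : (F v A p).neighborFinset v
      = Finset.univ.biUnion
          (fun i => ((p i).neighborFinset ⟨v, v_mem_SS v A i⟩).image Subtype.val) := by
    ext b
    simp only [SimpleGraph.mem_neighborFinset, Finset.mem_biUnion, Finset.mem_univ, true_and,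
      Finset.mem_image]
    constructor
    · rintro ⟨j, hv2, hb2, h⟩
      exact ⟨j, ⟨b, hb2⟩, h, rfl⟩
    · rintro ⟨j, ⟨b', hb'⟩, hadj, rfl⟩
      exact ⟨j, v_mem_SS v A j, hb', hadj⟩
  rw [SimpleGraph.degree, hkey, Finset.card_biUnion]
  · refine Finset.sum_congr rfl fun i _ => ?_
    rw [Finset.card_image_of_injective _ Subtype.val_injective, SimpleGraph.degree]
  · intro i _ j _ hij
    rw [Function.onFun, Finset.disjoint_left]
    rintro b hbi hbj
    obtain ⟨⟨b1, hb1⟩, hadj1, rfl⟩ := Finset.mem_image.1 hbi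
    obtain ⟨⟨b2, hb2⟩, hadj2, he⟩ := Finset.mem_image.1 hbj
    have hadj1' := (SimpleGraph.mem_neighborFinset _ _ _).1 hadj1
    have hb1v : b1 ≠ v := fun h => hadj1'.ne' (Subtype.ext h)
    have hb2' : b1 ∈ SS v A j := by
      have hbb : b2 = b1 := he
      exact hbb ▸ hb2
    exact hb1v (st.eq_v_of_mem hij hb1 hb2')

open Classical in
lemma Setup.degree_v_pos (st : Setup G v A) {i : Fin k} (hp : (p i).Connected) :
    1 ≤ (p i).degree ⟨v, v_mem_SS v A i⟩ := by
  obtain ⟨u, hu⟩ := st.hne i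
  have hneq : (⟨v, v_mem_SS v A i⟩ : SS v A i) ≠ ⟨u, mem_SS.2 (Or.inr hu)⟩ := by
    intro h
    exact st.hv i ((Subtype.mk.injEq _ _ _ _ ▸ h : v = u) ▸ hu)
  obtain ⟨w⟩ := hp.preconnected ⟨v, v_mem_SS v A i⟩ ⟨u, mem_SS.2 (Or.inr hu)⟩
  cases w with
  | nil => exact absurd rfl hneq
  | cons h w =>
    rw [Nat.one_le_iff_ne_zero, ← Nat.pos_iff_ne_zero]
    rw [SimpleGraph.degree_pos_iff_exists_adj]
    exact ⟨_, h⟩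

open Classical in
/-- auxiliary degree function on `V`. -/
noncomputable def DD (p : ∀ i, SimpleGraph (SS v A i)) (i : Fin k) (a : V) : ℕ :=
  if h : a ∈ SS v A i then (p i).degree ⟨a, h⟩ else 0

open Classical in
lemma DD_mem {i : Fin k} {a : V} (h : a ∈ SS v A i) :
    DD p i a = (p i).degree ⟨a, h⟩ := dif_pos h

open Classical in
lemma Setup.monomial_key (st : Setup G v A) (hk : 1 ≤ k)
    (hp : ∀ i, (p i).Connected) :
    (∏ u : V, (X u : MvPolynomial V ℝ) ^ ((F v A p).degree u - 1))
      = (X v : MvPolynomial V ℝ) ^ (k - 1)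
        * ∏ i : Fin k, rename (Subtype.val)
            (∏ w : SS v A i, (X w : MvPolynomial (SS v A i) ℝ) ^ ((p i).degree w - 1)) := by
  set d : Fin k → ℕ := fun i => (p i).degree ⟨v, v_mem_SS v A i⟩ with hd
  -- compute each renamed factor
  have hfact : ∀ i : Fin k,
      rename (Subtype.val)
          (∏ w : SS v A i, (X w : MvPolynomial (SS v A i) ℝ) ^ ((p i).degree w - 1))
        = (X v : MvPolynomial V ℝ) ^ (d i - 1)
            * ∏ a ∈ A i, (X a : MvPolynomial V ℝ) ^ (DD p i a - 1) := by
    intro i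
    rw [map_prod]
    simp only [map_pow, rename_X]
    have h1 : (∏ w : SS v A i, (X w.1 : MvPolynomial V ℝ) ^ ((p i).degree w - 1))
        = ∏ w : SS v A i, (fun a => (X a : MvPolynomial V ℝ) ^ (DD p i a - 1)) w.1 :=
      Finset.prod_congr rfl (fun w _ => by simp only [DD_mem w.2])
    rw [h1, ← Finset.prod_subtype (insert v (A i))
      (fun x => by simp [SS]) (fun a => (X a : MvPolynomial V ℝ) ^ (DD p i a - 1))]
    rw [Finset.prod_insert (st.hv i), DD_mem (v_mem_SS v A i)]
  -- split the product over V
  have hvnot : v ∉ Finset.univ.biUnion (fun i => A i) := by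
    simp only [Finset.mem_biUnion, Finset.mem_univ, true_and, not_exists]
    exact st.hv
  have hV : (Finset.univ : Finset V) = insert v (Finset.univ.biUnion fun i => A i) := by
    ext a
    simp only [Finset.mem_univ, true_iff, Finset.mem_insert, Finset.mem_biUnion, Finset.mem_univ,
      true_and]
    by_cases h : a = v
    · exact Or.inl h
    · exact Or.inr (st.hcover a h)
  have hLHS : (∏ u : V, (X u : MvPolynomial V ℝ) ^ ((F v A p).degree u - 1))
      = (X v : MvPolynomial V ℝ) ^ ((∑ i, d i) - 1)
          * ∏ i : Fin k, ∏ a ∈ A i, (X a : MvPolynomial V ℝ) ^ (DD p i a - 1) := by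
    rw [show (∏ u : V, (X u : MvPolynomial V ℝ) ^ ((F v A p).degree u - 1))
        = ∏ u ∈ (Finset.univ : Finset V), (X u : MvPolynomial V ℝ) ^ ((F v A p).degree u - 1)
        from rfl, hV, Finset.prod_insert hvnot, st.degree_F_v,
      Finset.prod_biUnion]
    · refine congrArg₂ _ rfl ?_
      refine Finset.prod_congr rfl fun i _ => Finset.prod_congr rfl fun a ha => ?_
      rw [st.degree_F_of_mem ha, DD_mem (mem_SS.2 (Or.inr ha))]
    · intro i _ j _ hij
      exact (st.hdisj i j hij) -- might need type coercion
  -- sum up powers of X v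
  have h1le : ∀ i, 1 ≤ d i := fun i => st.degree_v_pos (hp i)
  have hsum : (∑ i, d i) - 1 = (k - 1) + ∑ i, (d i - 1) := by
    have h2 : ∑ i, d i = ∑ i, (d i - 1) + k := by
      calc ∑ i, d i = ∑ i, ((d i - 1) + 1) :=
            Finset.sum_congr rfl fun i _ => by have := h1le i; omega
        _ = ∑ i, (d i - 1) + ∑ _i : Fin k, 1 := Finset.sum_add_distrib
        _ = ∑ i, (d i - 1) + k := by simp
    omega
  rw [hLHS, hsum]
  rw [Finset.prod_congr rfl (fun i _ => hfact i), Finset.prod_mul_distrib,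
    Finset.prod_pow_eq_pow_sum, pow_add]
  ring

end GlueAux

/-- Gluing lemma: if `v` is a cut vertex of the connected graph `G`, and
`A 1, …, A k` are the vertex sets of the connected components of `G - v`, then
`P_G = x_v^(k-1) · Π_i P_{G[A i ∪ {v}]}`. -/
theorem stmt12 {V : Type*} [Fintype V] [DecidableEq V] (G : SimpleGraph V)
    (hG : G.Connected) (v : V) (k : ℕ) (hk : 2 ≤ k) (A : Fin k → Finset V)
    (hne : ∀ i, (A i).Nonempty)
    (hv : ∀ i, v ∉ A i)
    (hdisj : ∀ i j, i ≠ j → Disjoint (A i) (A j))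
    (hcover : ∀ u : V, u ≠ v → ∃ i, u ∈ A i)
    (hconn : ∀ i, (G.induce ((A i : Finset V) : Set V)).Connected)
    (hnoedge : ∀ i j, i ≠ j → ∀ a ∈ A i, ∀ b ∈ A j, ¬ G.Adj a b) :
    spanPoly V G
      = (X v : MvPolynomial V ℝ) ^ (k - 1)
        * ∏ i : Fin k,
            MvPolynomial.rename (Subtype.val)
              (spanPoly _ (G.induce ((insert v (A i) : Finset V) : Set V))) := by
  classical
  have st : GlueAux.Setup G v A := ⟨hne, hv, hdisj, hcover, hnoedge⟩
  unfold spanPoly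
  simp only [map_sum]
  rw [Finset.prod_univ_sum, Finset.mul_sum]
  refine Finset.sum_nbij'
    (i := fun T => fun i : Fin k => T.induce (GlueAux.SS v A i))
    (j := fun p => GlueAux.F v A p) ?_ ?_ ?_ ?_ ?_
  · intro T hT
    simp only [Finset.mem_filter, Finset.mem_univ, true_and] at hT
    obtain ⟨hTle, hTtree⟩ := hT
    rw [Fintype.mem_piFinset]
    intro i
    simp only [Finset.mem_filter, Finset.mem_univ, true_and]
    exact ⟨fun x y hxy => hTle hxy,
      st.induce_connected hTle hTtree.1 i, GlueAux.induce_acyclic hTtree.2 _⟩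
  · intro p hp
    rw [Fintype.mem_piFinset] at hp
    simp only [Finset.mem_filter, Finset.mem_univ, true_and] at hp
    have hple : ∀ i, p i ≤ G.induce (GlueAux.SS v A i) := fun i => (hp i).1
    have hptree : ∀ i, (p i).IsTree := fun i => (hp i).2
    simp only [Finset.mem_filter, Finset.mem_univ, true_and]
    exact ⟨GlueAux.F_le hple,
      st.F_connected (fun i => (hptree i).1), st.F_acyclic hptree⟩
  · intro T hT
    simp only [Finset.mem_filter, Finset.mem_univ, true_and] at hT
    exact st.F_induce hT.1
  · intro p hp
    funext i
    exact st.induce_F i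
  · intro T hT
    simp only [Finset.mem_filter, Finset.mem_univ, true_and] at hT
    obtain ⟨hTle, hTtree⟩ := hT
    conv_lhs => rw [← st.F_induce hTle]
    exact st.monomial_key (le_trans one_le_two hk)
      (fun i => st.induce_connected hTle hTtree.1 i)
end

section
/- The vertex spanning polynomial of the complete graph K_n equals (x1 + x2 + ... + x_n)^{n−2} (Cayley's formula). -/
open MvPolynomial Finset

open Finset Nat SimpleGraph

variable {V : Type*} [Fintype V] [DecidableEq V]

lemma multinomial_rec (c : V → ℕ) (k : ℕ) (h : ∑ v, c v = k + 1) :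
    Nat.multinomial univ c =
      ∑ j : V, if c j = 0 then 0
        else Nat.multinomial univ (Function.update c j (c j - 1)) := by
  have hpos : 0 < ∏ v, (c v)! := Finset.prod_pos fun v _ => Nat.factorial_pos _
  apply Nat.eq_of_mul_eq_mul_left hpos
  rw [Nat.multinomial_spec, h, Finset.mul_sum]
  have hterm : ∀ j : V, (∏ v, (c v)!) * (if c j = 0 then 0
      else Nat.multinomial univ (Function.update c j (c j - 1))) = c j * k ! := by
    intro j
    by_cases hj : c j = 0
    · simp [hj]
    · rw [if_neg hj]
      have hprod : ∏ v, (c v)! = c j * ∏ v, ((Function.update c j (c j - 1)) v)! := by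
        rw [← Finset.mul_prod_erase univ (fun v => ((Function.update c j (c j - 1)) v)!)
          (mem_univ j),
          ← Finset.mul_prod_erase univ (fun v => (c v)!) (mem_univ j)]
        have he : ∏ v ∈ univ.erase j, ((Function.update c j (c j - 1)) v)!
            = ∏ v ∈ univ.erase j, (c v)! := by
          refine Finset.prod_congr rfl fun v hv => ?_
          rw [Function.update_of_ne (Finset.ne_of_mem_erase hv)]
        rw [he, ← mul_assoc, Function.update_self]
        congr 1
        have : c j = c j - 1 + 1 := by omega
        conv_lhs => rw [this, Nat.factorial_succ]
        rw [← this]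
      have hsum : ∑ v, (Function.update c j (c j - 1)) v = k := by
        rw [Finset.sum_update_of_mem (mem_univ j), ← Finset.erase_eq]
        have := h
        rw [← Finset.add_sum_erase univ c (mem_univ j)] at this
        omega
      rw [hprod, mul_assoc, Nat.multinomial_spec, hsum]
  rw [Finset.sum_congr rfl fun j _ => hterm j, ← Finset.sum_mul, h, Nat.factorial_succ]

open SimpleGraph

lemma multinomial_subtype [Fintype V] [DecidableEq V] (v₀ : V) (g : V → ℕ) (hg : g v₀ = 0) :
    Nat.multinomial (univ : Finset {x : V // x ≠ v₀}) (fun u => g u.val) =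
      Nat.multinomial univ g := by
  classical
  have hProd : ∏ u : {x : V // x ≠ v₀}, (g u.val)! = ∏ v, (g v)! := by
    rw [← Finset.prod_subtype (univ.erase v₀)
      (fun x => by simp [Finset.mem_erase]) (fun v => (g v)!)]
    exact Finset.prod_erase _ (by simp [hg])
  have hSum : ∑ u : {x : V // x ≠ v₀}, g u.val = ∑ v, g v := by
    rw [← Finset.sum_subtype (univ.erase v₀)
      (fun x => by simp [Finset.mem_erase]) g]
    exact Finset.sum_erase _ (by simp [hg])
  apply Nat.eq_of_mul_eq_mul_left
    (show 0 < ∏ v, (g v)! from Finset.prod_pos fun v _ => Nat.factorial_pos _)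
  conv_lhs => rw [← hProd, Nat.multinomial_spec, hSum]
  rw [Nat.multinomial_spec]

section Graph

variable {W : Type*}

lemma path_avoids_of_unique_nbr [DecidableEq W] {G : SimpleGraph W} {v₀ j : W}
    (hj : ∀ x, G.Adj v₀ x ↔ x = j) {u w : W} (p : G.Walk u w) (hp : p.IsPath)
    (hu : u ≠ v₀) (hw : w ≠ v₀) : v₀ ∉ p.support := by
  intro hmem
  obtain ⟨y, hy, r, hr⟩ := Walk.exists_eq_cons_of_ne (Ne.symm hu) (p.takeUntil v₀ hmem).reverse
  have hyj : y = j := (hj y).mp hy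
  have hj1 : j ∈ (p.takeUntil v₀ hmem).support := by
    rw [← List.mem_reverse, ← Walk.support_reverse, hr, Walk.support_cons, ← hyj]
    exact List.mem_cons_of_mem _ r.start_mem_support
  obtain ⟨y2, hy2, r2, hr2⟩ := Walk.exists_eq_cons_of_ne
    (show v₀ ≠ w from fun h => hw h.symm) (p.dropUntil v₀ hmem)
  have hy2j : y2 = j := (hj y2).mp hy2
  have hj2 : j ∈ (p.dropUntil v₀ hmem).support.tail := by
    rw [hr2, Walk.support_cons, List.tail_cons, ← hy2j]
    exact r2.start_mem_support
  have hnd := hp.support_nodup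
  rw [← Walk.take_spec p hmem, Walk.support_append] at hnd
  exact (List.disjoint_of_nodup_append hnd) hj1 hj2

lemma cycle_avoids_of_unique_nbr [DecidableEq W] {G : SimpleGraph W} {v₀ j : W}
    (hj : ∀ x, G.Adj v₀ x ↔ x = j) {x : W} (c : G.Walk x x) (hc : c.IsCycle) :
    v₀ ∉ c.support := by
  intro hmem
  have hc' := hc.rotate hmem
  set c' := c.rotate v₀ hmem with hcdef
  have hnn : ¬ c'.Nil := by
    have h3 := hc'.three_le_length
    intro h
    rw [Walk.nil_iff_length_eq] at h
    omega
  obtain ⟨y, hy, q, hq⟩ := Walk.not_nil_iff.mp hnn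
  have hyj : y = j := (hj y).mp hy
  subst hyj
  have hjv : y ≠ v₀ := hy.ne'
  obtain ⟨y2, hy2, r2, hr2⟩ := Walk.exists_eq_cons_of_ne (Ne.symm hjv) q.reverse
  have hy2j : y2 = y := (hj y2).mp hy2
  have hmem2 : s(v₀, y) ∈ q.edges := by
    subst hy2j
    have : s(v₀, y2) ∈ q.reverse.edges := by
      rw [hr2, Walk.edges_cons]
      exact List.mem_cons_self
    rwa [Walk.edges_reverse, List.mem_reverse] at this
  have hnd := hc'.edges_nodup
  rw [hq, Walk.edges_cons] at hnd
  exact (List.nodup_cons.mp hnd).1 hmem2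

lemma exists_pullback {v₀ : W} {G : SimpleGraph W} {S : SimpleGraph {x : W // x ≠ v₀}}
    (hAdj : ∀ (a b : W) (ha : a ≠ v₀) (hb : b ≠ v₀), G.Adj a b → S.Adj ⟨a, ha⟩ ⟨b, hb⟩) :
    ∀ {a b : W} (p : G.Walk a b), v₀ ∉ p.support → ∀ (ha : a ≠ v₀) (hb : b ≠ v₀),
    ∃ q : S.Walk ⟨a, ha⟩ ⟨b, hb⟩, q.support.map Subtype.val = p.support ∧
      q.edges.map (Sym2.map Subtype.val) = p.edges := by
  intro a b p
  induction p with
  | nil => exact fun _ ha hb => ⟨Walk.nil, by simp, by simp⟩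
  | @cons a u b h p ih =>
    intro hp ha hb
    have hu : u ≠ v₀ := by
      intro h'
      exact hp (by rw [Walk.support_cons]; exact List.mem_cons_of_mem _ (h' ▸ p.start_mem_support))
    have hp' : v₀ ∉ p.support := by
      intro hm
      exact hp (by rw [Walk.support_cons]; exact List.mem_cons_of_mem _ hm)
    obtain ⟨q, hq1, hq2⟩ := ih hp' hu hb
    exact ⟨Walk.cons (hAdj _ _ ha hu h) q, by simp [Walk.support_cons, hq1],
      by simp [Walk.edges_cons, hq2]⟩

lemma degree_pos_of_connected [Fintype W] {G : SimpleGraph W} (hG : G.Connected)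
    (hW : 1 < Fintype.card W) (v : W) [Fintype (G.neighborSet v)] : 0 < G.degree v := by
  have : Nontrivial W := Fintype.one_lt_card_iff_nontrivial.mp hW
  obtain ⟨w, hw⟩ := exists_ne v
  obtain ⟨p⟩ := hG.preconnected v w
  rw [G.degree_pos_iff_exists_adj]
  cases p with
  | nil => exact absurd rfl hw.symm
  | cons h _ => exact ⟨_, h⟩

end Graph

section UpDown

variable {W : Type*} [DecidableEq W] {v₀ : W}

/-- Restriction of a graph to the complement of `v₀`. -/
def gdown (G : SimpleGraph W) (v₀ : W) : SimpleGraph {x : W // x ≠ v₀} :=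
  SimpleGraph.comap Subtype.val G

lemma gdown_adj {G : SimpleGraph W} {a b : {x : W // x ≠ v₀}} :
    (gdown G v₀).Adj a b ↔ G.Adj a.val b.val := Iff.rfl

/-- Extension of a graph on the complement of `v₀` by attaching `v₀` as a leaf at `j`. -/
def gup (S : SimpleGraph {x : W // x ≠ v₀}) (j : {x : W // x ≠ v₀}) : SimpleGraph W :=
  SimpleGraph.map Subtype.val S ⊔ SimpleGraph.edge v₀ j.val

lemma gup_adj {S : SimpleGraph {x : W // x ≠ v₀}} {j : {x : W // x ≠ v₀}} {a b : W} :
    (gup S j).Adj a b ↔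
      (∃ (ha : a ≠ v₀) (hb : b ≠ v₀), S.Adj ⟨a, ha⟩ ⟨b, hb⟩) ∨
        (a = v₀ ∧ b = j.val) ∨ (b = v₀ ∧ a = j.val) := by
  simp only [gup, sup_adj, SimpleGraph.map_adj, SimpleGraph.edge_adj,
    Function.Embedding.coeFn_mk]
  constructor
  · rintro (⟨-, a', b', h, rfl, rfl⟩ | ⟨(⟨rfl, rfl⟩ | ⟨rfl, rfl⟩), hne⟩)
    · exact Or.inl ⟨a'.2, b'.2, h⟩
    · exact Or.inr (Or.inl ⟨rfl, rfl⟩)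
    · exact Or.inr (Or.inr ⟨rfl, rfl⟩)
  · rintro (⟨ha, hb, h⟩ | ⟨rfl, rfl⟩ | ⟨rfl, rfl⟩)
    · exact Or.inl ⟨fun e => h.ne (Subtype.ext e), ⟨a, ha⟩, ⟨b, hb⟩, h, rfl, rfl⟩
    · exact Or.inr ⟨Or.inl ⟨rfl, rfl⟩, Ne.symm j.2⟩
    · exact Or.inr ⟨Or.inr ⟨rfl, rfl⟩, j.2⟩

lemma gup_adj_v0 {S : SimpleGraph {x : W // x ≠ v₀}} {j : {x : W // x ≠ v₀}} (x : W) :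
    (gup S j).Adj v₀ x ↔ x = j.val := by
  rw [gup_adj]
  constructor
  · rintro (⟨ha, _, _⟩ | ⟨_, h⟩ | ⟨h1, h2⟩)
    · exact absurd rfl ha
    · exact h
    · exact absurd h2.symm j.2
  · rintro rfl
    exact Or.inr (Or.inl ⟨rfl, rfl⟩)

lemma gdown_gup {S : SimpleGraph {x : W // x ≠ v₀}} {j : {x : W // x ≠ v₀}} :
    gdown (gup S j) v₀ = S := by
  ext a b
  rw [gdown_adj, gup_adj]
  constructor
  · rintro (⟨ha, hb, h⟩ | ⟨h1, _⟩ | ⟨h1, _⟩)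
    · exact h
    · exact absurd h1 a.2
    · exact absurd h1 b.2
  · intro h
    exact Or.inl ⟨a.2, b.2, h⟩

lemma gup_gdown {T : SimpleGraph W} {j : {x : W // x ≠ v₀}}
    (hj : ∀ x, T.Adj v₀ x ↔ x = j.val) : gup (gdown T v₀) j = T := by
  ext a b
  rw [gup_adj]
  constructor
  · rintro (⟨ha, hb, h⟩ | ⟨rfl, rfl⟩ | ⟨rfl, rfl⟩)
    · exact h
    · exact (hj _).mpr rfl
    · exact ((hj _).mpr rfl).symm
  · intro h
    by_cases ha : a = v₀
    · subst ha
      exact Or.inr (Or.inl ⟨rfl, (hj b).mp h⟩)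
    · by_cases hb : b = v₀
      · subst hb
        exact Or.inr (Or.inr ⟨rfl, (hj a).mp h.symm⟩)
      · exact Or.inl ⟨ha, hb, h⟩

lemma gup_isTree [Nonempty W] {S : SimpleGraph {x : W // x ≠ v₀}} {j : {x : W // x ≠ v₀}}
    (hS : S.IsTree) : (gup S j).IsTree := by
  let homUp : S →g gup S j :=
    ⟨Subtype.val, fun {a b} h => gup_adj.mpr (Or.inl ⟨a.2, b.2, h⟩)⟩
  constructor
  · -- connected
    have reach : ∀ x : W, (gup S j).Reachable x j.val := by
      intro x
      by_cases hx : x = v₀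
      · subst hx
        exact ((gup_adj_v0 j.val).mpr rfl).reachable
      · exact (hS.isConnected.preconnected ⟨x, hx⟩ j).map homUp
    exact ⟨fun x y => (reach x).trans (reach y).symm⟩
  · -- acyclic
    intro z c hc
    have hv : v₀ ∉ c.support := cycle_avoids_of_unique_nbr (gup_adj_v0 (j := j)) c hc
    have hz : z ≠ v₀ := fun h => hv (h ▸ c.start_mem_support)
    have hAdj : ∀ (a b : W) (ha : a ≠ v₀) (hb : b ≠ v₀),
        (gup S j).Adj a b → S.Adj ⟨a, ha⟩ ⟨b, hb⟩ := by
      intro a b ha hb h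
      rcases gup_adj.mp h with ⟨ha', hb', h'⟩ | ⟨h1, _⟩ | ⟨h1, _⟩
      · exact h'
      · exact absurd h1 ha
      · exact absurd h1 hb
    obtain ⟨q, hq1, hq2⟩ := exists_pullback hAdj c hv hz hz
    have hqe : q.edges.Nodup := by
      have := hc.edges_nodup
      rw [← hq2] at this
      exact this.of_map _
    have hqn : q ≠ Walk.nil := by
      intro h
      have h3 := hc.three_le_length
      have hlen : c.support.length = q.support.length := by
        rw [← hq1, List.length_map]
      rw [h, c.length_support] at hlen
      simp only [Walk.support_nil, List.length_singleton] at hlen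
      omega
    have hqs : q.support.tail.Nodup := by
      have := hc.support_nodup
      rw [← hq1, ← List.map_tail] at this
      exact this.of_map _
    exact hS.IsAcyclic q ⟨⟨⟨hqe⟩, hqn⟩, hqs⟩

lemma gdown_isTree {T : SimpleGraph W} (hT : T.IsTree) {j : {x : W // x ≠ v₀}}
    (hj : ∀ x, T.Adj v₀ x ↔ x = j.val) : (gdown T v₀).IsTree := by
  constructor
  · -- connected
    have : Nonempty {x : W // x ≠ v₀} := ⟨j⟩
    refine ⟨fun u w => ?_⟩
    obtain ⟨p, hp, -⟩ := hT.existsUnique_path u.val w.val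
    have hv : v₀ ∉ p.support := path_avoids_of_unique_nbr hj p hp u.2 w.2
    have hAdj : ∀ (a b : W) (ha : a ≠ v₀) (hb : b ≠ v₀),
        T.Adj a b → (gdown T v₀).Adj ⟨a, ha⟩ ⟨b, hb⟩ := fun a b ha hb h => h
    obtain ⟨q, -, -⟩ := exists_pullback hAdj p hv u.2 w.2
    exact ⟨q⟩
  · -- acyclic
    intro z c hc
    exact hT.IsAcyclic (c.map ⟨Subtype.val, fun {a b} h => h⟩)
      (hc.map (f := ⟨Subtype.val, fun {a b} h => h⟩) Subtype.val_injective)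

end UpDown

section Degrees

open scoped Classical

variable {W : Type*} [Fintype W] [DecidableEq W] {v₀ : W}

lemma gup_degree_v0 (S : SimpleGraph {x : W // x ≠ v₀}) (j : {x : W // x ≠ v₀})
    [Fintype ((gup S j).neighborSet v₀)] :
    (gup S j).degree v₀ = 1 := by
  have hset : (gup S j).neighborFinset v₀ = {j.val} := by
    ext x
    rw [SimpleGraph.mem_neighborFinset, gup_adj_v0, Finset.mem_singleton]
  rw [← SimpleGraph.card_neighborFinset_eq_degree, hset, Finset.card_singleton]

lemma gup_degree (S : SimpleGraph {x : W // x ≠ v₀}) (j u : {x : W // x ≠ v₀})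
    [Fintype ((gup S j).neighborSet u.val)] [Fintype (S.neighborSet u)] :
    (gup S j).degree u.val = S.degree u + (if u = j then 1 else 0) := by
  have hset : (gup S j).neighborFinset u.val =
      (S.neighborFinset u).image Subtype.val ∪ (if u = j then {v₀} else ∅) := by
    ext x
    rw [SimpleGraph.mem_neighborFinset, gup_adj]
    simp only [Finset.mem_union, Finset.mem_image, SimpleGraph.mem_neighborFinset]
    constructor
    · rintro (⟨ha, hb, h⟩ | ⟨h1, _⟩ | ⟨rfl, h2⟩)
      · exact Or.inl ⟨⟨x, hb⟩, h, rfl⟩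
      · exact absurd h1 u.2
      · have : u = j := Subtype.ext h2
        rw [if_pos this]
        simp
    · rintro (⟨w, hw, rfl⟩ | hx)
      · exact Or.inl ⟨u.2, w.2, hw⟩
      · by_cases huj : u = j
        · rw [if_pos huj] at hx
          rw [Finset.mem_singleton] at hx
          subst hx
          exact Or.inr (Or.inr ⟨rfl, congrArg Subtype.val huj⟩)
        · rw [if_neg huj] at hx
          exact absurd hx (Finset.notMem_empty _)
  have hdisj : Disjoint ((S.neighborFinset u).image Subtype.val)
      (if u = j then ({v₀} : Finset W) else ∅) := by
    split_ifs
    · rw [Finset.disjoint_singleton_right]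
      simp only [Finset.mem_image]
      rintro ⟨w, _, hw⟩
      exact w.2 hw
    · exact Finset.disjoint_empty_right _
  rw [← SimpleGraph.card_neighborFinset_eq_degree, hset, Finset.card_union_of_disjoint hdisj,
    Finset.card_image_of_injective _ Subtype.val_injective,
    SimpleGraph.card_neighborFinset_eq_degree]
  congr 1
  split_ifs <;> simp

lemma gdown_degree (T : SimpleGraph W) (u : {x : W // x ≠ v₀})
    [Fintype (T.neighborSet u.val)] [Fintype ((gdown T v₀).neighborSet u)] :
    T.degree u.val = (gdown T v₀).degree u + (if T.Adj u.val v₀ then 1 else 0) := by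
  have hset : T.neighborFinset u.val =
      ((gdown T v₀).neighborFinset u).image Subtype.val ∪
        (if T.Adj u.val v₀ then {v₀} else ∅) := by
    ext x
    simp only [SimpleGraph.mem_neighborFinset, Finset.mem_union, Finset.mem_image, gdown_adj]
    constructor
    · intro h
      by_cases hx : x = v₀
      · subst hx
        rw [if_pos h]
        simp
      · exact Or.inl ⟨⟨x, hx⟩, h, rfl⟩
    · rintro (⟨w, hw, rfl⟩ | hx)
      · exact hw
      · by_cases hadj : T.Adj u.val v₀
        · rw [if_pos hadj, Finset.mem_singleton] at hx
          subst hx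
          exact hadj
        · rw [if_neg hadj] at hx
          exact absurd hx (Finset.notMem_empty _)
  have hdisj : Disjoint (((gdown T v₀).neighborFinset u).image Subtype.val)
      (if T.Adj u.val v₀ then ({v₀} : Finset W) else ∅) := by
    split_ifs
    · rw [Finset.disjoint_singleton_right]
      simp only [Finset.mem_image]
      rintro ⟨w, _, hw⟩
      exact w.2 hw
    · exact Finset.disjoint_empty_right _
  rw [← SimpleGraph.card_neighborFinset_eq_degree, hset, Finset.card_union_of_disjoint hdisj,
    Finset.card_image_of_injective _ Subtype.val_injective,
    SimpleGraph.card_neighborFinset_eq_degree]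
  congr 1
  split_ifs <;> simp

lemma unique_nbr_of_degree_one {G : SimpleGraph W} [Fintype (G.neighborSet v₀)]
    (h1 : G.degree v₀ = 1) :
    ∃ j : {x : W // x ≠ v₀}, ∀ x, G.Adj v₀ x ↔ x = j.val := by
  rw [← SimpleGraph.card_neighborFinset_eq_degree, Finset.card_eq_one] at h1
  obtain ⟨a, ha⟩ := h1
  have hadj : ∀ x, G.Adj v₀ x ↔ x = a := by
    intro x
    rw [← SimpleGraph.mem_neighborFinset, ha, Finset.mem_singleton]
  exact ⟨⟨a, fun h => G.irrefl (h ▸ (hadj a).mpr rfl)⟩, hadj⟩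

end Degrees

section Count

open scoped Classical

lemma top_degree_eq {W : Type*} [Fintype W] [DecidableEq W] (v : W)
    [Fintype ((⊤ : SimpleGraph W).neighborSet v)] :
    (⊤ : SimpleGraph W).degree v = Fintype.card W - 1 := by
  have hset : (⊤ : SimpleGraph W).neighborFinset v = univ.erase v := by
    ext x
    rw [SimpleGraph.mem_neighborFinset, SimpleGraph.top_adj, Finset.mem_erase]
    simp [ne_comm]
  rw [← SimpleGraph.card_neighborFinset_eq_degree, hset, Finset.card_erase_of_mem (mem_univ v),
    Finset.card_univ]

lemma top_isTree_of_card_le {W : Type*} [Fintype W] (h0 : 0 < Fintype.card W)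
    (h2 : Fintype.card W ≤ 2) : (⊤ : SimpleGraph W).IsTree := by
  have : Nonempty W := Fintype.card_pos_iff.mp h0
  constructor
  · exact SimpleGraph.connected_top
  · intro z c hc
    have h3 := hc.three_le_length
    have hnd := hc.support_nodup
    have hle := hnd.length_le_card
    have : c.support.tail.length = c.length := by
      rw [List.length_tail, c.length_support]
      omega
    omega

lemma tree_count : ∀ (m : ℕ), 2 ≤ m → ∀ (V : Type) [Fintype V] [DecidableEq V], ∀ (c : V → ℕ),
    Fintype.card V = m → (∑ v, c v = m - 2) →
    ((univ : Finset (SimpleGraph V)).filter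
      (fun T => T.IsTree ∧ ∀ v, T.degree v = c v + 1)).card = Nat.multinomial univ c := by
  intro m hm
  induction m, hm using Nat.le_induction with
  | base =>
    intro V hF hD c hV hc
    have hc' : ∑ v, c v = 0 := by omega
    have hc0 : ∀ v, c v = 0 := fun v =>
      Finset.sum_eq_zero_iff.mp hc' v (mem_univ v)
    have hmult : Nat.multinomial univ c = 1 := by
      have hspec := Nat.multinomial_spec univ c
      have h1 : ∏ v, (c v)! = 1 := Finset.prod_eq_one fun v _ => by rw [hc0 v]; rfl
      rw [h1, one_mul, hc'] at hspec
      exact hspec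
    rw [hmult]
    rw [Finset.card_eq_one]
    refine ⟨⊤, ?_⟩
    rw [Finset.eq_singleton_iff_unique_mem]
    constructor
    · rw [Finset.mem_filter]
      refine ⟨mem_univ _, top_isTree_of_card_le (by omega) (by omega), fun v => ?_⟩
      rw [top_degree_eq, hV, hc0 v]
    · intro T hT
      obtain ⟨-, hTree, -⟩ := Finset.mem_filter.mp hT
      ext a b
      rw [SimpleGraph.top_adj]
      constructor
      · exact fun h => h.ne
      · intro hab
        obtain ⟨p⟩ := hTree.isConnected.preconnected a b
        cases p with
        | nil => exact absurd rfl hab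
        | cons h q =>
          rename_i y
          have hy : y = b := by
            have huniv : ({a, b} : Finset V) = univ := by
              apply Finset.eq_of_subset_of_card_le (Finset.subset_univ _)
              rw [Finset.card_univ, hV, Finset.card_pair hab]
            have : y ∈ ({a, b} : Finset V) := by rw [huniv]; exact mem_univ y
            rcases Finset.mem_insert.mp this with h' | h'
            · exact absurd h' h.ne'
            · exact Finset.mem_singleton.mp h'
          exact hy ▸ h
  | succ m hm ih =>
    intro V hF hD c hV hc
    classical
    have hv₀ : ∃ v₀, c v₀ = 0 := by
      by_contra h
      push_neg at h
      have h1 : ∀ v ∈ (univ : Finset V), 1 ≤ c v := fun v _ => Nat.one_le_iff_ne_zero.mpr (h v)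
      have := Finset.sum_le_sum h1
      rw [Finset.sum_const, Finset.card_univ, hV] at this
      simp at this
      omega
    obtain ⟨v₀, hv₀⟩ := hv₀
    have hcard' : Fintype.card {x : V // x ≠ v₀} = m := by
      have h1 : Fintype.card {x : V // x ≠ v₀} =
          Fintype.card V - Fintype.card {x : V // x = v₀} :=
        Fintype.card_subtype_compl _
      rw [h1, Fintype.card_subtype_eq, hV]
      omega
    -- the fiber over each choice of the neighbor of v₀
    have hcardj : ∀ j : {x : V // x ≠ v₀},
        (((univ : Finset (SimpleGraph V)).filter
            (fun T => T.IsTree ∧ ∀ v, T.degree v = c v + 1)).filter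
          (fun T => T.Adj v₀ j.val)).card =
        (if c j.val = 0 then 0
          else Nat.multinomial univ (Function.update c j.val (c j.val - 1))) := by
      intro j
      have hbij : (((univ : Finset (SimpleGraph V)).filter
            (fun T => T.IsTree ∧ ∀ v, T.degree v = c v + 1)).filter
          (fun T => T.Adj v₀ j.val)).card =
          ((univ : Finset (SimpleGraph {x : V // x ≠ v₀})).filter
            (fun S => S.IsTree ∧ ∀ u, S.degree u =
              (if u = j then c u.val else c u.val + 1))).card := by
        apply Finset.card_bij (fun T _ => gdown T v₀)
        · -- maps to target
          intro T hT
          rw [Finset.mem_filter, Finset.mem_filter] at hT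
          obtain ⟨⟨-, hTree, hdeg⟩, hadj⟩ := hT
          obtain ⟨j₀, hj₀⟩ := unique_nbr_of_degree_one (G := T)
            (by rw [hdeg v₀, hv₀])
          have hjj : j₀ = j := Subtype.ext (((hj₀ j.val).mp hadj).symm)
          subst hjj
          rw [Finset.mem_filter]
          refine ⟨mem_univ _, gdown_isTree hTree hj₀, fun u => ?_⟩
          have hd := gdown_degree (v₀ := v₀) T u
          have hadj_iff : T.Adj u.val v₀ ↔ u = j₀ := by
            rw [SimpleGraph.adj_comm, hj₀ u.val]
            exact ⟨fun h => Subtype.ext h, fun h => congrArg Subtype.val h⟩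
          rw [hdeg u.val] at hd
          by_cases huj : u = j₀
          · rw [if_pos huj]
            rw [if_pos (hadj_iff.mpr huj)] at hd
            omega
          · rw [if_neg huj]
            rw [if_neg (fun h => huj (hadj_iff.mp h))] at hd
            omega
        · -- injective
          intro T hT T' hT' heq
          rw [Finset.mem_filter, Finset.mem_filter] at hT hT'
          obtain ⟨⟨-, hTree, hdeg⟩, hadj⟩ := hT
          obtain ⟨⟨-, hTree', hdeg'⟩, hadj'⟩ := hT'
          obtain ⟨j₀, hj₀⟩ := unique_nbr_of_degree_one (G := T) (by rw [hdeg v₀, hv₀])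
          obtain ⟨j₁, hj₁⟩ := unique_nbr_of_degree_one (G := T') (by rw [hdeg' v₀, hv₀])
          have h0 : j₀ = j := Subtype.ext (((hj₀ j.val).mp hadj).symm)
          have h1 : j₁ = j := Subtype.ext (((hj₁ j.val).mp hadj').symm)
          subst h0; subst h1
          rw [← gup_gdown hj₀, ← gup_gdown hj₁, heq]
        · -- surjective
          intro S hS
          rw [Finset.mem_filter] at hS
          obtain ⟨-, hTree, hdeg⟩ := hS
          have hne : Nonempty V := ⟨v₀⟩
          refine ⟨gup S j, ?_, gdown_gup⟩
          rw [Finset.mem_filter, Finset.mem_filter]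
          refine ⟨⟨mem_univ _, gup_isTree hTree, fun v => ?_⟩, (gup_adj_v0 j.val).mpr rfl⟩
          by_cases hvv : v = v₀
          · subst hvv
            rw [gup_degree_v0, hv₀]
          · have hd : (gup S j).degree v = S.degree ⟨v, hvv⟩ +
                (if (⟨v, hvv⟩ : {x : V // x ≠ v₀}) = j then 1 else 0) :=
              gup_degree S j ⟨v, hvv⟩
            have hd2 : S.degree ⟨v, hvv⟩ =
                (if (⟨v, hvv⟩ : {x : V // x ≠ v₀}) = j then c v else c v + 1) := hdeg ⟨v, hvv⟩
            by_cases huj : (⟨v, hvv⟩ : {x : V // x ≠ v₀}) = j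
            · rw [if_pos huj] at hd2
              rw [if_pos huj] at hd
              omega
            · rw [if_neg huj] at hd2
              rw [if_neg huj] at hd
              omega
      rw [hbij]
      by_cases hcj : c j.val = 0
      · rw [if_pos hcj, Finset.card_eq_zero, Finset.eq_empty_iff_forall_notMem]
        intro S hS
        rw [Finset.mem_filter] at hS
        obtain ⟨-, hTree, hdeg⟩ := hS
        have h0 := hdeg j
        rw [if_pos rfl] at h0
        have hpos : 0 < S.degree j :=
          degree_pos_of_connected hTree.isConnected (by omega) j
        omega
      · rw [if_neg hcj]
        have hval : ∀ u : {x : V // x ≠ v₀}, (if u = j then c u.val else c u.val + 1) =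
            (if u = j then c u.val - 1 else c u.val) + 1 := by
          intro u
          by_cases h : u = j
          · subst h
            rw [if_pos rfl, if_pos rfl]
            omega
          · rw [if_neg h, if_neg h]
        simp only [hval]
        have hsum' : ∑ u : {x : V // x ≠ v₀}, (if u = j then c u.val - 1 else c u.val)
            = m - 2 := by
          have hpt : ∀ u : {x : V // x ≠ v₀}, (if u = j then c u.val - 1 else c u.val) +
              (if u = j then 1 else 0) = c u.val := by
            intro u
            by_cases h : u = j
            · subst h
              rw [if_pos rfl, if_pos rfl]
              omega
            · rw [if_neg h, if_neg h]
              omega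
          have h2 : ∑ u : {x : V // x ≠ v₀}, ((if u = j then c u.val - 1 else c u.val) +
              (if u = j then 1 else 0)) = ∑ u : {x : V // x ≠ v₀}, c u.val :=
            Finset.sum_congr rfl fun u _ => hpt u
          rw [Finset.sum_add_distrib] at h2
          have h3 : ∑ u : {x : V // x ≠ v₀}, (if u = j then 1 else 0) = 1 := by
            rw [Finset.sum_ite_eq' univ j (fun _ => 1)]
            simp
          have h4 : ∑ u : {x : V // x ≠ v₀}, c u.val = m - 1 := by
            rw [← Finset.sum_subtype (univ.erase v₀)
              (fun x => by simp [Finset.mem_erase]) c,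
              Finset.sum_erase _ (by simpa using hv₀)]
            omega
          omega
        rw [ih {x : V // x ≠ v₀} (fun u => if u = j then c u.val - 1 else c u.val)
          hcard' hsum']
        have hg0 : Function.update c j.val (c j.val - 1) v₀ = 0 := by
          rw [Function.update_of_ne (Ne.symm j.2)]
          exact hv₀
        rw [← multinomial_subtype v₀ (Function.update c j.val (c j.val - 1)) hg0]
        apply Nat.multinomial_congr
        intro u _
        by_cases h : u = j
        · subst h
          rw [if_pos rfl, Function.update_self]
        · rw [if_neg h, Function.update_of_ne (fun hv => h (Subtype.ext hv))]
    -- assemble over all possible neighbors of v₀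
    have hcover : ((univ : Finset (SimpleGraph V)).filter
          (fun T => T.IsTree ∧ ∀ v, T.degree v = c v + 1)) =
        (univ : Finset {x : V // x ≠ v₀}).biUnion
          (fun j => ((univ : Finset (SimpleGraph V)).filter
            (fun T => T.IsTree ∧ ∀ v, T.degree v = c v + 1)).filter
              (fun T => T.Adj v₀ j.val)) := by
      ext T
      simp only [Finset.mem_biUnion, Finset.mem_univ, true_and]
      constructor
      · intro hT
        have hdeg := (Finset.mem_filter.mp hT).2.2
        obtain ⟨j₀, hj₀⟩ := unique_nbr_of_degree_one (G := T) (by rw [hdeg v₀, hv₀])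
        exact ⟨j₀, Finset.mem_filter.mpr ⟨hT, (hj₀ j₀.val).mpr rfl⟩⟩
      · rintro ⟨j, hj⟩
        exact (Finset.mem_filter.mp hj).1
    rw [hcover, Finset.card_biUnion]
    · have hrec : Nat.multinomial univ c = ∑ v : V, if c v = 0 then 0
          else Nat.multinomial univ (Function.update c v (c v - 1)) :=
        multinomial_rec c (m - 2) (by omega)
      rw [hrec, Finset.sum_congr rfl (fun j _ => hcardj j)]
      rw [← Finset.add_sum_erase univ _ (mem_univ v₀), if_pos hv₀, zero_add]
      exact (Finset.sum_subtype (univ.erase v₀) (fun x => by simp [Finset.mem_erase])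
        (fun v => if c v = 0 then 0
          else Nat.multinomial univ (Function.update c v (c v - 1)))).symm
    · intro j _ j' _ hjj
      rw [Function.onFun, Finset.disjoint_left]
      intro T hT hT'
      have hdeg := (Finset.mem_filter.mp (Finset.mem_filter.mp hT).1).2.2
      obtain ⟨j₀, hj₀⟩ := unique_nbr_of_degree_one (G := T) (by rw [hdeg v₀, hv₀])
      have h1 : j = j₀ := Subtype.ext ((hj₀ j.val).mp (Finset.mem_filter.mp hT).2)
      have h2 : j' = j₀ := Subtype.ext ((hj₀ j'.val).mp (Finset.mem_filter.mp hT').2)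
      exact hjj (h1.trans h2.symm)

lemma tree_sum_deg {V : Type*} [Fintype V] {T : SimpleGraph V} (hT : T.IsTree)
    (h2 : 2 ≤ Fintype.card V) : ∑ v, (T.degree v - 1) = Fintype.card V - 2 := by
  have h1 : ∀ v, 1 ≤ T.degree v := fun v =>
    degree_pos_of_connected hT.isConnected (by omega) v
  have hsum : ∑ v, (T.degree v - 1) + Fintype.card V = ∑ v, T.degree v := by
    have hone : ∑ _v : V, 1 = Fintype.card V := by
      rw [Finset.sum_const, Finset.card_univ, smul_eq_mul, mul_one]
    rw [← hone, ← Finset.sum_add_distrib]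
    exact Finset.sum_congr rfl fun v _ => by have := h1 v; omega
  have he : ∑ v, T.degree v = 2 * (Fintype.card V - 1) := by
    rw [SimpleGraph.sum_degrees_eq_twice_card_edges]
    have := hT.card_edgeFinset
    omega
  omega

end Count

/-- Cayley's formula: the vertex spanning polynomial of the complete graph Kₙ equals
`(x₁ + ⋯ + xₙ)^(n-2)`. -/
theorem stmt15 (n : ℕ) (hn : 1 ≤ n) :
    spanPoly (Fin n) ⊤ = (∑ i : Fin n, (X i : MvPolynomial (Fin n) ℝ)) ^ (n - 2) := by
  classical
  unfold spanPoly
  obtain rfl | hn2 : n = 1 ∨ 2 ≤ n := by omega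
  · -- n = 1
    have hbot : ∀ G : SimpleGraph (Fin 1), G = ⊥ := by
      intro G
      ext a b
      have : a = b := Subsingleton.elim a b
      subst this
      simp
    have hT : (⊥ : SimpleGraph (Fin 1)).IsTree := by
      refine ⟨⟨fun a b => ?_⟩, SimpleGraph.isAcyclic_bot⟩
      rw [Subsingleton.elim a b]
    rw [Finset.sum_congr (show _ = ({⊥} : Finset (SimpleGraph (Fin 1))) by
      ext T
      simp only [Finset.mem_filter, Finset.mem_singleton, Finset.mem_univ, true_and, le_top]
      exact ⟨fun _ => hbot T, fun _ => by rw [hbot T]; exact hT⟩) (fun T _ => rfl)]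
    rw [Finset.sum_singleton]
    have hdeg : ∀ (i : Fin 1) (instN : Fintype ((⊥ : SimpleGraph (Fin 1)).neighborSet i)),
        (⊥ : SimpleGraph (Fin 1)).degree i = 0 := by
      intro i instN
      rw [← SimpleGraph.card_neighborFinset_eq_degree, Finset.card_eq_zero]
      ext x
      simp [SimpleGraph.mem_neighborFinset]
    simp [hdeg]
  · -- 2 ≤ n
    have hcard : (2 : ℕ) ≤ Fintype.card (Fin n) := by simp [Fintype.card_fin]; omega
    rw [Finset.sum_congr (show _ =
        (Finset.univ.filter (fun T : SimpleGraph (Fin n) => T.IsTree)) by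
      ext T
      simp only [Finset.mem_filter, Finset.mem_univ, true_and, le_top]) (fun T _ => rfl)]
    rw [← Finset.sum_fiberwise_of_maps_to (g := fun T : SimpleGraph (Fin n) =>
        (fun v => T.degree v - 1)) (t := Finset.piAntidiag univ (n - 2))
      (fun T hT => by
        rw [Finset.mem_piAntidiag]
        have hT' := (Finset.mem_filter.mp hT).2
        refine ⟨?_, fun i _ => Finset.mem_univ i⟩
        rw [tree_sum_deg hT' hcard, Fintype.card_fin])]
    rw [Finset.sum_pow_eq_sum_piAntidiag]
    refine Finset.sum_congr rfl fun k hk => ?_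
    have hinner : ∀ T ∈ (Finset.univ.filter (fun T : SimpleGraph (Fin n) => T.IsTree)).filter
        (fun T => (fun v => T.degree v - 1) = k),
        ∏ v, (X v : MvPolynomial (Fin n) ℝ) ^ (T.degree v - 1) = ∏ v, (X v) ^ (k v) := by
      intro T hT
      have hkk := (Finset.mem_filter.mp hT).2
      exact Finset.prod_congr rfl fun v _ => by rw [← congrFun hkk v]
    rw [Finset.sum_congr rfl hinner, Finset.sum_const, nsmul_eq_mul]
    congr 1
    have hcc := @tree_count n hn2 (Fin n) _ (fun a b => Classical.propDecidable _) k
      (Fintype.card_fin n) (by have := (Finset.mem_piAntidiag.mp hk).1; simpa using this)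
    rw [← hcc]
    refine congrArg _ (congrArg Finset.card ?_)
    ext T
    simp only [Finset.mem_filter, Finset.mem_univ, true_and]
    constructor
    · rintro ⟨hTree, hfun⟩
      refine ⟨hTree, fun v => ?_⟩
      have h1 : 1 ≤ T.degree v :=
        degree_pos_of_connected hTree.isConnected (by omega) v
      have h2 := congrFun hfun v
      beta_reduce at h2
      omega
    · rintro ⟨hTree, hdeg⟩
      refine ⟨hTree, funext fun v => ?_⟩
      rw [hdeg v]
      omega
end

section
/- Let n ≥ 6 and specialize the Laurent-free form of P_{C_n} by the coloring f(1)=f(2)=1, f(4)=f(5)=2, f(k)=3 otherwise. The resulting polynomial Q(y1,y2,y3) contains the monomials y1²·y3^{n−4} and y2²·y3^{n−4} with nonzero coefficients, but the coefficient of y1·y2·y3^{n−4} is zero; hence the Newton polytope of Q is not saturated. -/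
open MvPolynomial Finset

private lemma pair_eq19 (a b c d : Fin 3) :
    ((Finsupp.single a 1 + Finsupp.single b 1 : Fin 3 →₀ ℕ)
        = Finsupp.single c 1 + Finsupp.single d 1)
      ↔ ((a = c ∧ b = d) ∨ (a = d ∧ b = c)) := by
  simp only [Finsupp.ext_iff, Finsupp.add_apply, Finsupp.single_apply]
  revert a b c d; decide

private lemma prod_X_eq19 {σ : Type*} [DecidableEq σ] (S : Finset σ) (h : σ → Fin 3) :
    ∏ j ∈ S, (X (h j) : MvPolynomial (Fin 3) ℝ)
      = monomial (∑ j ∈ S, Finsupp.single (h j) 1) 1 := by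
  induction S using Finset.induction with
  | empty => simp
  | insert _ _ ha ih =>
      rw [Finset.prod_insert ha, Finset.sum_insert ha, ih, X, monomial_mul, one_mul]

private def gfun19 (m : ℕ) : Fin (m + 6) → Fin 3 :=
  fun i => if i.val = 0 ∨ i.val = 1 then 0 else if i.val = 3 ∨ i.val = 4 then 1 else 2

private noncomputable def efun19 (m : ℕ) (i : Fin (m + 6)) : Fin 3 →₀ ℕ :=
  ∑ j ∈ ({i, i + 1}ᶜ : Finset (Fin (m + 6))), Finsupp.single (gfun19 m j) 1

private lemma g0_19 (m : ℕ) (i : Fin (m + 6)) :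
    gfun19 m i = 0 ↔ (i.val = 0 ∨ i.val = 1) := by
  simp only [gfun19]; split_ifs with hA hB <;> constructor <;> intro h <;>
    first | rfl | omega | exact absurd h (by decide)

private lemma g1_19 (m : ℕ) (i : Fin (m + 6)) :
    gfun19 m i = 1 ↔ (i.val = 3 ∨ i.val = 4) := by
  simp only [gfun19]; split_ifs with hA hB <;> simp [Fin.ext_iff] <;> omega

private lemma hval19 (m : ℕ) (i : Fin (m + 6)) :
    (i + 1).val = if i.val = m + 5 then 0 else i.val + 1 := by
  have hlt := i.isLt
  rw [Fin.add_def]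
  have h1 : (1 : Fin (m + 6)).val = 1 := by
    rw [Fin.val_one']; exact Nat.mod_eq_of_lt (by omega)
  rw [h1]
  split_ifs with h
  · rw [h]; exact Nat.mod_self _
  · exact Nat.mod_eq_of_lt (by omega)

private lemma hne19 (m : ℕ) (i : Fin (m + 6)) : i ≠ i + 1 := by
  intro h
  have h2 := congrArg Fin.val h
  rw [hval19] at h2
  have := i.isLt
  split_ifs at h2 <;> omega

private lemma hT19 (m : ℕ) :
    ∑ j : Fin (m + 6), Finsupp.single (gfun19 m j) 1
      = Finsupp.single 0 2 + Finsupp.single 1 2 + Finsupp.single 2 (m + 2) := by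
  rw [Fin.sum_univ_succ, Fin.sum_univ_succ, Fin.sum_univ_succ, Fin.sum_univ_succ,
    Fin.sum_univ_succ, Fin.sum_univ_succ]
  have h2 : ∀ i : Fin m,
      gfun19 m (((((i.succ).succ).succ).succ).succ).succ = 2 := by
    intro i
    simp only [gfun19, Fin.val_succ]
    rw [if_neg, if_neg] <;> omega
  rw [Finset.sum_congr rfl (fun i _ => by rw [h2 i]), Finset.sum_const,
    Finset.card_univ, Fintype.card_fin]
  have hg0 : gfun19 m 0 = 0 := rfl
  have hg1 : gfun19 m (Fin.succ 0) = 0 := rfl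
  have hg2 : gfun19 m ((Fin.succ 0).succ) = 2 := rfl
  have hg3 : gfun19 m (((Fin.succ 0).succ).succ) = 1 := rfl
  have hg4 : gfun19 m ((((Fin.succ 0).succ).succ).succ) = 1 := rfl
  have hg5 : gfun19 m (((((Fin.succ 0).succ).succ).succ).succ) = 2 := rfl
  rw [hg0, hg1, hg2, hg3, hg4, hg5]
  have hsmul : m • (Finsupp.single (2 : Fin 3) 1 : Fin 3 →₀ ℕ) = Finsupp.single 2 m := by
    rw [Finsupp.smul_single, smul_eq_mul, mul_one]
  rw [hsmul]
  have e0 : (Finsupp.single (0 : Fin 3) 2 : Fin 3 →₀ ℕ)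
      = Finsupp.single 0 1 + Finsupp.single 0 1 := by rw [← Finsupp.single_add]
  have e1 : (Finsupp.single (1 : Fin 3) 2 : Fin 3 →₀ ℕ)
      = Finsupp.single 1 1 + Finsupp.single 1 1 := by rw [← Finsupp.single_add]
  have e2 : (Finsupp.single (2 : Fin 3) (m + 2) : Fin 3 →₀ ℕ)
      = Finsupp.single 2 1 + (Finsupp.single 2 1 + Finsupp.single 2 m) := by
    rw [← Finsupp.single_add, ← Finsupp.single_add]; ring_nf
  rw [e0, e1, e2]
  abel

private lemma key19 (m : ℕ) (i : Fin (m + 6)) (d r : Fin 3 →₀ ℕ)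
    (h : Finsupp.single 0 2 + Finsupp.single 1 2 + Finsupp.single 2 (m + 2) = d + r) :
    efun19 m i = d ↔
      Finsupp.single (gfun19 m i) 1 + Finsupp.single (gfun19 m (i + 1)) 1 = r := by
  have h1 : efun19 m i
      + (Finsupp.single (gfun19 m i) 1 + Finsupp.single (gfun19 m (i + 1)) 1)
      = Finsupp.single 0 2 + Finsupp.single 1 2 + Finsupp.single 2 (m + 2) := by
    have hp : ∑ j ∈ ({i, i + 1} : Finset (Fin (m + 6))), Finsupp.single (gfun19 m j) 1
        = Finsupp.single (gfun19 m i) 1 + Finsupp.single (gfun19 m (i + 1)) 1 :=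
      Finset.sum_pair (hne19 m i)
    rw [← hp, efun19, Finset.sum_compl_add_sum, hT19]
  rw [h] at h1
  constructor
  · intro he; rw [he] at h1; exact add_left_cancel h1
  · intro hp; rw [hp] at h1; exact add_right_cancel h1

/-- For n ≥ 6 (written n = m + 6), specialize the vertex spanning polynomial of Cₙ,
`P = Σ_i Π_{j ∉ {i, i+1}} x_j`, via the 3-coloring `f` with `f 1 = f 2 = 1`,
`f 4 = f 5 = 2`, `f k = 3` otherwise (written 0-indexed).  The resulting polynomial
`Q(y₁, y₂, y₃)` has the monomials `y₁² y₃^(n-4)` and `y₂² y₃^(n-4)` with nonzero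
coefficients, but the coefficient of `y₁ y₂ y₃^(n-4)` vanishes; hence the Newton
polytope of `Q` is not saturated. -/
theorem stmt19 (m : ℕ) :
    ∀ Q : MvPolynomial (Fin 3) ℝ,
      Q = MvPolynomial.aeval
            (fun i : Fin (m + 6) =>
              if i.val = 0 ∨ i.val = 1 then (X 0 : MvPolynomial (Fin 3) ℝ)
              else if i.val = 3 ∨ i.val = 4 then X 1
              else X 2)
            (∑ i : Fin (m + 6), ∏ j ∈ ({i, i + 1}ᶜ : Finset (Fin (m + 6))),
              (X j : MvPolynomial (Fin (m + 6)) ℝ)) →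
      Q.coeff (Finsupp.single 0 2 + Finsupp.single 2 (m + 2)) ≠ 0 ∧
      Q.coeff (Finsupp.single 1 2 + Finsupp.single 2 (m + 2)) ≠ 0 ∧
      Q.coeff (Finsupp.single 0 1 + Finsupp.single 1 1 + Finsupp.single 2 (m + 2)) = 0 := by
  intro Q hQ
  subst hQ
  rw [map_sum]
  have hmono : ∀ i : Fin (m + 6),
      (aeval (fun i : Fin (m + 6) =>
        if i.val = 0 ∨ i.val = 1 then (X 0 : MvPolynomial (Fin 3) ℝ)
        else if i.val = 3 ∨ i.val = 4 then X 1 else X 2))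
        (∏ j ∈ ({i, i + 1}ᶜ : Finset (Fin (m + 6))), (X j : MvPolynomial (Fin (m + 6)) ℝ))
      = monomial (efun19 m i) 1 := by
    intro i
    rw [map_prod]
    simp only [aeval_X]
    have hXg : ∀ j : Fin (m + 6),
        (if j.val = 0 ∨ j.val = 1 then (X 0 : MvPolynomial (Fin 3) ℝ)
          else if j.val = 3 ∨ j.val = 4 then X 1 else X 2) = X (gfun19 m j) := by
      intro j; simp only [gfun19, apply_ite X]
    rw [Finset.prod_congr rfl (fun j _ => hXg j), prod_X_eq19]
    rfl
  rw [Finset.sum_congr rfl (fun i _ => hmono i)]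
  simp only [coeff_sum, coeff_monomial]
  refine ⟨?_, ?_, ?_⟩
  · -- coefficient of y0^2 y2^(m+2)
    have hd : (Finsupp.single 0 2 + Finsupp.single 1 2 + Finsupp.single 2 (m + 2) : Fin 3 →₀ ℕ)
        = (Finsupp.single 0 2 + Finsupp.single 2 (m + 2))
          + (Finsupp.single 1 1 + Finsupp.single 1 1) := by
      rw [← Finsupp.single_add]; abel
    have hcond : ∀ i : Fin (m + 6),
        (efun19 m i = Finsupp.single 0 2 + Finsupp.single 2 (m + 2)) ↔
          i = (⟨3, by omega⟩ : Fin (m + 6)) := by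
      intro i
      rw [key19 m i _ _ hd, pair_eq19, or_self, g1_19, g1_19, hval19]
      simp only [Fin.ext_iff, Fin.val_mk]
      have := i.isLt
      split_ifs <;>
        (try simp only [false_or, or_false, eq_self_iff_true, and_true, true_and]) <;> omega
    rw [Finset.sum_congr rfl (fun i _ => if_congr (hcond i) rfl rfl),
      Finset.sum_ite_eq' univ _ (fun _ => (1 : ℝ))]
    simp
  · -- coefficient of y1^2 y2^(m+2)
    have hd : (Finsupp.single 0 2 + Finsupp.single 1 2 + Finsupp.single 2 (m + 2) : Fin 3 →₀ ℕ)
        = (Finsupp.single 1 2 + Finsupp.single 2 (m + 2))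
          + (Finsupp.single 0 1 + Finsupp.single 0 1) := by
      rw [← Finsupp.single_add]; abel
    have hcond : ∀ i : Fin (m + 6),
        (efun19 m i = Finsupp.single 1 2 + Finsupp.single 2 (m + 2)) ↔
          i = (⟨0, by omega⟩ : Fin (m + 6)) := by
      intro i
      rw [key19 m i _ _ hd, pair_eq19, or_self, g0_19, g0_19, hval19]
      simp only [Fin.ext_iff, Fin.val_mk]
      have := i.isLt
      split_ifs <;>
        (try simp only [false_or, or_false, eq_self_iff_true, and_true, true_and]) <;> omega
    rw [Finset.sum_congr rfl (fun i _ => if_congr (hcond i) rfl rfl),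
      Finset.sum_ite_eq' univ _ (fun _ => (1 : ℝ))]
    simp
  · -- coefficient of y0 y1 y2^(m+2) vanishes
    have hd : (Finsupp.single 0 2 + Finsupp.single 1 2 + Finsupp.single 2 (m + 2) : Fin 3 →₀ ℕ)
        = (Finsupp.single 0 1 + Finsupp.single 1 1 + Finsupp.single 2 (m + 2))
          + (Finsupp.single 0 1 + Finsupp.single 1 1) := by
      have e0 : (Finsupp.single (0 : Fin 3) 2 : Fin 3 →₀ ℕ)
          = Finsupp.single 0 1 + Finsupp.single 0 1 := by rw [← Finsupp.single_add]
      have e1 : (Finsupp.single (1 : Fin 3) 2 : Fin 3 →₀ ℕ)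
          = Finsupp.single 1 1 + Finsupp.single 1 1 := by rw [← Finsupp.single_add]
      rw [e0, e1]; abel
    have hcond : ∀ i : Fin (m + 6),
        ¬ (efun19 m i = Finsupp.single 0 1 + Finsupp.single 1 1 + Finsupp.single 2 (m + 2)) := by
      intro i
      rw [key19 m i _ _ hd, pair_eq19]
      have := i.isLt
      rintro (⟨h1, h2⟩ | ⟨h1, h2⟩)
      · rw [g0_19] at h1; rw [g1_19, hval19] at h2
        split_ifs at h2 <;> rcases h2 with h2 | h2 <;>
          first | exact h2.elim | omega
      · rw [g1_19] at h1; rw [g0_19, hval19] at h2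
        split_ifs at h2 <;> rcases h2 with h2 | h2 <;>
          first | exact h2.elim | omega
    rw [Finset.sum_congr rfl (fun i _ => if_neg (hcond i)), Finset.sum_const, smul_zero]
end
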